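/- Let λ > 0, N ∈ ℝ with N ≠ 0, δ > 0, and let y : [0,∞) → ℝ be continuous with e^{−λt} y(t) → N as t → ∞. For every ε > 0 with ε|y(0)| < δ, the hitting time τ_ε = inf{ t ≥ 0 : ε |y(t)| ≥ δ } is finite, and lim_{ε→0+} [ τ_ε − λ^{−1} ln( δ / (ε |N|) ) ] = 0. -/

import Mathlib

open Filter Set

/-- Deterministic core of the exit-time lemma for the linearized process:
if `e^{−λt} y(t) → N ≠ 0`, then the hitting time `τ_ε = inf{t ≥ 0 : ε|y(t)| ≥ δ}` is finite
(for `ε` with `ε|y(0)| < δ`), and `τ_ε − λ⁻¹ ln(δ/(ε|N|)) → 0` as `ε → 0+`. -/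
theorem stmt11 (lam N δ : ℝ) (hlam : 0 < lam) (hN : N ≠ 0) (hδ : 0 < δ)
    (y : ℝ → ℝ) (hy : Continuous y)
    (hconv : Tendsto (fun t => Real.exp (-lam * t) * y t) atTop (nhds N)) :
    (∀ ε > 0, ε * |y 0| < δ → {t : ℝ | 0 ≤ t ∧ δ ≤ ε * |y t|}.Nonempty) ∧
    Tendsto
      (fun ε => sInf {t : ℝ | 0 ≤ t ∧ δ ≤ ε * |y t|} - lam⁻¹ * Real.log (δ / (ε * |N|)))
      (nhdsWithin 0 (Ioi 0)) (nhds 0) := by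
  set A := |N| with hAdef
  have hA : 0 < A := abs_pos.mpr hN
  have hy_eq : ∀ t, |y t| = Real.exp (lam * t) * (Real.exp (-lam * t) * |y t|) := by
    intro t
    rw [← mul_assoc, ← Real.exp_add, neg_mul, add_neg_cancel, Real.exp_zero, one_mul]
  have hg : Tendsto (fun t => Real.exp (-lam * t) * |y t|) atTop (nhds A) := by
    have := hconv.abs
    simpa [abs_mul, Real.abs_exp] using this
  -- Part 1
  have key1 : ∀ ε > 0, {t : ℝ | 0 ≤ t ∧ δ ≤ ε * |y t|}.Nonempty := by
    intro ε hε
    have hexp : Tendsto (fun t : ℝ => Real.exp (lam * t)) atTop atTop :=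
      Real.tendsto_exp_atTop.comp (tendsto_id.const_mul_atTop hlam)
    have h1 : Tendsto (fun t => Real.exp (lam * t) * (Real.exp (-lam * t) * |y t|))
        atTop atTop := hexp.atTop_mul_pos hA hg
    have h3 : Tendsto (fun t => ε * |y t|) atTop atTop := by
      refine (h1.const_mul_atTop hε).congr fun t => ?_
      rw [← hy_eq]
    obtain ⟨t, ht⟩ := ((h3.eventually_ge_atTop δ).and (eventually_ge_atTop (0 : ℝ))).exists
    exact ⟨t, ht.2, ht.1⟩
  refine ⟨fun ε hε _ => key1 ε hε, ?_⟩
  rw [Metric.tendsto_nhds]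
  intro η hη
  set r := Real.exp (lam * (η / 2)) with hrdef
  have hr1 : 1 < r := by
    rw [hrdef, show (1:ℝ) = Real.exp 0 from Real.exp_zero.symm]
    exact Real.exp_lt_exp.mpr (by positivity)
  have hr0 : 0 < r := lt_trans one_pos hr1
  -- threshold T₀
  have hlow : ∀ᶠ t in atTop, A / r < Real.exp (-lam * t) * |y t| :=
    hg.eventually (eventually_gt_nhds (div_lt_self hA hr1))
  have hhigh : ∀ᶠ t in atTop, Real.exp (-lam * t) * |y t| < A * r :=
    hg.eventually (eventually_lt_nhds (lt_mul_of_one_lt_right hA hr1))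
  obtain ⟨T₁, hT₁⟩ := eventually_atTop.mp (hlow.and hhigh)
  set T₀ := max T₁ 0 with hT₀def
  -- bound on compact interval
  obtain ⟨C, hC⟩ := (isCompact_Icc (a := (0:ℝ)) (b := T₀)).exists_bound_of_continuousOn
    hy.continuousOn
  set M := max C 1 with hMdef
  have hM0 : 0 < M := lt_of_lt_of_le one_pos (le_max_right _ _)
  have hMb : ∀ t ∈ Icc (0:ℝ) T₀, |y t| ≤ M := fun t ht =>
    le_trans (by simpa [Real.norm_eq_abs] using hC t ht) (le_max_left _ _)
  -- eventual conditions on ε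
  have ev1 : ∀ᶠ ε in nhdsWithin 0 (Ioi (0:ℝ)), 0 < ε := eventually_mem_nhdsWithin
  have ev2 : ∀ᶠ ε in nhdsWithin 0 (Ioi (0:ℝ)), ε * M < δ := by
    have h : Tendsto (fun ε : ℝ => ε * M) (nhds 0) (nhds 0) := by
      simpa using (continuous_mul_right M).tendsto (0:ℝ)
    exact Eventually.filter_mono nhdsWithin_le_nhds (h.eventually_lt_const hδ)
  have hTtop : Tendsto (fun ε : ℝ => lam⁻¹ * Real.log (δ / (ε * A)))
      (nhdsWithin 0 (Ioi (0:ℝ))) atTop := by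
    have h0 : Tendsto (fun ε : ℝ => ε⁻¹) (nhdsWithin 0 (Ioi (0:ℝ))) atTop :=
      tendsto_inv_nhdsGT_zero
    have h1 : Tendsto (fun ε : ℝ => δ / (ε * A)) (nhdsWithin 0 (Ioi (0:ℝ))) atTop := by
      refine (h0.const_mul_atTop (show 0 < δ / A by positivity)).congr fun ε => ?_
      ring
    exact (Real.tendsto_log_atTop.comp h1).const_mul_atTop (inv_pos.mpr hlam)
  have ev3 : ∀ᶠ ε in nhdsWithin 0 (Ioi (0:ℝ)),
      T₀ + η / 2 ≤ lam⁻¹ * Real.log (δ / (ε * A)) := hTtop.eventually_ge_atTop _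
  filter_upwards [ev1, ev2, ev3] with ε hε hεM hεT
  set T := lam⁻¹ * Real.log (δ / (ε * A)) with hTdef
  have hεA : 0 < ε * A := by positivity
  have hexpT : Real.exp (lam * T) = δ / (ε * A) := by
    rw [hTdef, ← mul_assoc, mul_inv_cancel₀ hlam.ne', one_mul,
      Real.exp_log (by positivity)]
  set S := {t : ℝ | 0 ≤ t ∧ δ ≤ ε * |y t|} with hSdef
  have hbdd : BddBelow S := ⟨0, fun x hx => hx.1⟩
  -- t₊ is in S
  set tp := T + η / 2 with htpdef
  have htpT₀ : T₀ ≤ tp := by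
    rw [htpdef]; linarith
  have hexp_tp : Real.exp (lam * tp) = δ / (ε * A) * r := by
    rw [show lam * tp = lam * T + lam * (η / 2) by rw [htpdef]; ring, Real.exp_add, hexpT]
  have htpS : tp ∈ S := by
    have hgt : A / r < Real.exp (-lam * tp) * |y tp| :=
      (hT₁ tp (le_trans (le_max_left _ _) htpT₀)).1
    constructor
    · exact le_trans (le_max_right _ _) htpT₀
    · have h1 : δ = ε * (Real.exp (lam * tp) * (A / r)) := by
        rw [hexp_tp]; field_simp
      have h2 : ε * (Real.exp (lam * tp) * (A / r))
          ≤ ε * (Real.exp (lam * tp) * (Real.exp (-lam * tp) * |y tp|)) := by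
        apply mul_le_mul_of_nonneg_left _ hε.le
        exact mul_le_mul_of_nonneg_left hgt.le (Real.exp_pos _).le
      rw [hy_eq tp]
      linarith [h1 ▸ h2]
  have hub : sInf S ≤ tp := csInf_le hbdd htpS
  -- lower bound
  have hlb : T - η / 2 ≤ sInf S := by
    apply le_csInf ⟨tp, htpS⟩
    intro t ht
    obtain ⟨ht0, htδ⟩ := ht
    by_cases hcase : t ≤ T₀
    · exfalso
      have : ε * |y t| ≤ ε * M :=
        mul_le_mul_of_nonneg_left (hMb t ⟨ht0, hcase⟩) hε.le
      linarith
    · push_neg at hcase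
      have hgt : Real.exp (-lam * t) * |y t| < A * r :=
        (hT₁ t (le_trans (le_max_left _ _) hcase.le)).2
      have h1 : δ < Real.exp (lam * t) * (ε * A * r) := by
        calc δ ≤ ε * |y t| := htδ
          _ = ε * (Real.exp (lam * t) * (Real.exp (-lam * t) * |y t|)) := by
              rw [← hy_eq]
          _ < ε * (Real.exp (lam * t) * (A * r)) := by
              apply mul_lt_mul_of_pos_left _ hε
              exact mul_lt_mul_of_pos_left hgt (Real.exp_pos _)
          _ = Real.exp (lam * t) * (ε * A * r) := by ring
      have hexp_lt : Real.exp (lam * (T - η / 2)) < Real.exp (lam * t) := by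
        rw [show lam * (T - η / 2) = lam * T - lam * (η / 2) by ring, Real.exp_sub,
          hexpT, ← hrdef, div_div, div_lt_iff₀ (by positivity)]
        exact h1
      have := Real.exp_lt_exp.mp hexp_lt
      have := (mul_lt_mul_iff_right₀ hlam).mp this
      linarith
  rw [htpdef] at hub
  rw [Real.dist_eq, sub_zero]
  show |sInf S - T| < η
  rw [abs_lt]
  constructor <;> linarith
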